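/- Let f be a weighted Boolean CSP instance on n ≥ 1 variables with m ≥ 1 constraints and weighted length ℓ > 0, and suppose w̄ is a real number with 0 < w̄ ≤ w*. Let ε ∈ (0,1] and let δ be a real number with δ ≥ 1 + εw̄/ℓ (so δ > 1). Set r = ⌊n·εw̄/(δℓ)⌋. Then the number of assignments z ∈ {0,1}^n with W(f,z) ≥ (1−ε)·w* is at least 2^{H(rδ/((δ−1)n)) · ((δ−1)/δ)·n} / (n+1). -/

import Mathlib

/-- A weighted Boolean constraint satisfaction (MAX-CSP) instance on `n` variables:
`m` constraints, where constraint `i` is specified by a finite set `vars i` of variables,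
a predicate `sat i` on assignments whose truth value depends only on the restriction of the
assignment to `vars i`, and a positive real weight `wt i`. -/
structure CSP (n : ℕ) where
  m : ℕ
  vars : Fin m → Finset (Fin n)
  sat : Fin m → (Fin n → Bool) → Bool
  wt : Fin m → ℝ
  wt_pos : ∀ i, 0 < wt i
  sat_local : ∀ i z z', (∀ j ∈ vars i, z j = z' j) → sat i z = sat i z'

namespace CSP

variable {n : ℕ}

/-- The total weight `w = Σᵢ wᵢ`. -/
noncomputable def totalWeight (f : CSP n) : ℝ := ∑ i, f.wt i

/-- The weighted length `ℓ = Σᵢ |Sᵢ| wᵢ`. -/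
noncomputable def wlen (f : CSP n) : ℝ := ∑ i, ((f.vars i).card : ℝ) * f.wt i

/-- The contribution `ℓⱼ` of variable `j`: the sum of the weights of all constraints
containing it. -/
noncomputable def contrib (f : CSP n) (j : Fin n) : ℝ :=
  ∑ i, if j ∈ f.vars i then f.wt i else 0

/-- The weight `W(f,z)` of an assignment `z`: the sum of the weights of the constraints
satisfied by `z`. -/
noncomputable def W (f : CSP n) (z : Fin n → Bool) : ℝ :=
  ∑ i, if f.sat i z then f.wt i else 0

/-- The optimal weight `w* = max_z W(f,z)`. -/
noncomputable def wstar (f : CSP n) : ℝ :=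
  Finset.univ.sup' Finset.univ_nonempty f.W

end CSP

/-- The binary entropy function `H(p) = -p log₂ p - (1-p) log₂ (1-p)`,
with the convention `0 log₂ 0 = 0` (enforced by `Real.logb 2 0 = 0`). -/
noncomputable def binH (p : ℝ) : ℝ := -p * Real.logb 2 p - (1 - p) * Real.logb 2 (1 - p)


section Aux

lemma ent_eq (r x : ℝ) (hr : 0 < r) (hx : r < x) :
    binH (r/x) * x = (x * Real.log x - r * Real.log r - (x-r) * Real.log (x-r)) / Real.log 2 := by
  have hx0 : 0 < x := lt_trans hr hx
  have h1 : (1 : ℝ) - r/x = (x - r)/x := by field_simp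
  rw [binH, h1]
  simp only [Real.logb]
  rw [Real.log_div (ne_of_gt hr) (ne_of_gt hx0), Real.log_div (by linarith) (ne_of_gt hx0)]
  field_simp
  ring

lemma phi_mono (r : ℝ) (hr : 0 < r) (x : ℝ) (hx : r < x) :
    MonotoneOn (fun y => y * Real.log y - (y - r) * Real.log (y - r)) (Set.Ici x) := by
  have hd : ∀ y ∈ Set.Ici x, HasDerivAt (fun y => y * Real.log y - (y - r) * Real.log (y - r))
      (Real.log y - Real.log (y - r)) y := by
    intro y hy
    simp only [Set.mem_Ici] at hy
    have hy0 : 0 < y := by linarith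
    have hyr : 0 < y - r := by linarith
    have d1 : HasDerivAt (fun y : ℝ => y * Real.log y) (Real.log y + 1) y :=
      Real.hasDerivAt_mul_log (ne_of_gt hy0)
    have d2 : HasDerivAt (fun y : ℝ => (y - r) * Real.log (y - r)) (Real.log (y - r) + 1) y := by
      have := (Real.hasDerivAt_mul_log (ne_of_gt hyr)).comp y ((hasDerivAt_id y).sub_const r)
      exact this.congr_deriv (by ring)
    exact (d1.sub d2).congr_deriv (by ring)
  apply monotoneOn_of_deriv_nonneg (convex_Ici x)
  · exact fun y hy => (hd y hy).continuousAt.continuousWithinAt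
  · intro y hy
    rw [interior_Ici] at hy
    exact (hd y (Set.mem_Ici.mpr (le_of_lt hy))).differentiableAt.differentiableWithinAt
  · intro y hy
    rw [interior_Ici] at hy
    rw [(hd y (Set.mem_Ici.mpr (le_of_lt hy))).deriv]
    simp only [Set.mem_Ioi] at hy
    have hyr : 0 < y - r := by linarith
    have : Real.log (y - r) ≤ Real.log y := Real.log_le_log hyr (by linarith)
    linarith

lemma term_key (M r : ℕ) (i : ℕ) (hi : i < M) :
    M.choose (i+1) * r ^ (i+1) * (M - r) ^ (M - (i+1)) * ((i+1) * (M-r))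
      = M.choose i * r ^ i * (M - r) ^ (M - i) * ((M - i) * r) := by
  have h1 : M.choose (i+1) * (i+1) = M.choose i * (M - i) := Nat.choose_succ_right_eq M i
  have h2 : (M - r) ^ (M - i) = (M - r) ^ (M - (i+1)) * (M - r) := by
    rw [← pow_succ]; congr 1; omega
  calc M.choose (i+1) * r ^ (i+1) * (M - r) ^ (M - (i+1)) * ((i+1) * (M-r))
      = (M.choose (i+1) * (i+1)) * (r ^ (i+1) * ((M - r) ^ (M - (i+1)) * (M-r))) := by ring
    _ = (M.choose i * (M - i)) * (r ^ (i+1) * ((M - r) ^ (M - (i+1)) * (M-r))) := by rw [h1]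
    _ = (M.choose i * (M - i)) * (r ^ (i+1) * (M - r) ^ (M - i)) := by rw [← h2]
    _ = M.choose i * r ^ i * (M - r) ^ (M - i) * ((M - i) * r) := by rw [pow_succ]; ring

lemma term_le (M r : ℕ) (h0 : 0 < r) (hrM : r < M) :
    ∀ i ≤ M, M.choose i * r ^ i * (M - r) ^ (M - i) ≤ M.choose r * r ^ r * (M - r) ^ (M - r) := by
  set t : ℕ → ℕ := fun i => M.choose i * r ^ i * (M - r) ^ (M - i) with ht
  have up : ∀ i < r, t i ≤ t (i+1) := by
    intro i hi
    have key := term_key M r i (lt_trans hi hrM)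
    have hmul : (i+1) * (M - r) ≤ (M - i) * r := by
      nlinarith [Nat.sub_add_cancel (le_of_lt hrM), Nat.sub_add_cancel (le_of_lt (lt_trans hi hrM))]
    have hpos : 0 < (i+1) * (M-r) := Nat.mul_pos (Nat.succ_pos i) (by omega)
    have : t i * ((i+1) * (M-r)) ≤ t (i+1) * ((i+1) * (M-r)) := by
      calc t i * ((i+1) * (M-r)) ≤ t i * ((M - i) * r) := Nat.mul_le_mul_left _ hmul
        _ = t (i+1) * ((i+1) * (M-r)) := key.symm
    exact Nat.le_of_mul_le_mul_right this hpos
  have down : ∀ i, r ≤ i → i < M → t (i+1) ≤ t i := by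
    intro i hri hiM
    have key := term_key M r i hiM
    have hmul : (M - i) * r ≤ (i+1) * (M - r) := by
      nlinarith [Nat.sub_add_cancel (le_of_lt hrM), Nat.sub_add_cancel (le_of_lt hiM)]
    have hpos : 0 < (i+1) * (M-r) := Nat.mul_pos (Nat.succ_pos i) (by omega)
    have : t (i+1) * ((i+1) * (M-r)) ≤ t i * ((i+1) * (M-r)) := by
      calc t (i+1) * ((i+1) * (M-r)) = t i * ((M - i) * r) := key
        _ ≤ t i * ((i+1) * (M-r)) := Nat.mul_le_mul_left _ hmul
    exact Nat.le_of_mul_le_mul_right this hpos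
  have aux1 : ∀ k i, i + k = r → t i ≤ t r := by
    intro k
    induction k with
    | zero => intro i hi; simp [show i = r by omega]
    | succ k ih =>
      intro i hi
      exact le_trans (up i (by omega)) (ih (i+1) (by omega))
  have aux2 : ∀ k, r + k ≤ M → t (r + k) ≤ t r := by
    intro k
    induction k with
    | zero => simp
    | succ k ih =>
      intro hk
      have : t (r + k + 1) ≤ t (r + k) := down (r + k) (by omega) (by omega)
      exact le_trans (by simpa [Nat.add_assoc] using this) (ih (by omega))
  intro i hiM
  rcases le_or_gt i r with h | h
  · exact aux1 (r - i) i (by omega)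
  · have := aux2 (i - r) (by omega)
    simpa [show r + (i - r) = i by omega] using this

lemma pow_le_choose_mul (M r : ℕ) (h0 : 0 < r) (hrM : r < M) :
    M ^ M ≤ (M + 1) * (M.choose r * r ^ r * (M - r) ^ (M - r)) := by
  have hb := add_pow r (M - r) M
  rw [Nat.add_sub_cancel' (le_of_lt hrM)] at hb
  rw [hb]
  have hle : ∀ i ∈ Finset.range (M+1), r ^ i * (M - r) ^ (M - i) * M.choose i
      ≤ M.choose r * r ^ r * (M - r) ^ (M - r) := by
    intro i hi
    have := term_le M r h0 hrM i (by simpa using Nat.lt_succ_iff.mp (Finset.mem_range.mp hi))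
    calc r ^ i * (M - r) ^ (M - i) * M.choose i = M.choose i * r ^ i * (M - r) ^ (M - i) := by ring
      _ ≤ _ := this
  calc ∑ i ∈ Finset.range (M+1), r ^ i * (M - r) ^ (M - i) * M.choose i
      ≤ ∑ _i ∈ Finset.range (M+1), M.choose r * r ^ r * (M - r) ^ (M - r) :=
        Finset.sum_le_sum hle
    _ = (M + 1) * (M.choose r * r ^ r * (M - r) ^ (M - r)) := by
        rw [Finset.sum_const, Finset.card_range]; ring

lemma two_rpow_ent (M r : ℕ) (h0 : 0 < r) (hrM : r < M) :
    (2:ℝ) ^ (((M:ℝ) * Real.log M - (r:ℝ) * Real.log r - ((M:ℝ) - r) * Real.log ((M:ℝ) - r)) / Real.log 2)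
      = (M:ℝ)^M / ((r:ℝ)^r * ((M:ℝ) - (r:ℝ))^(M - r)) := by
  have hM0 : (0:ℝ) < M := by exact_mod_cast h0.trans hrM
  have hr0 : (0:ℝ) < r := by exact_mod_cast h0
  have hMr : (0:ℝ) < (M:ℝ) - r := by
    have : (r:ℝ) < M := by exact_mod_cast hrM
    linarith
  have hlog2 : Real.log 2 ≠ 0 := by positivity
  rw [Real.rpow_def_of_pos (by norm_num : (0:ℝ) < 2)]
  have hcan : Real.log 2 * (((M:ℝ) * Real.log M - (r:ℝ) * Real.log r
      - ((M:ℝ) - r) * Real.log ((M:ℝ) - r)) / Real.log 2)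
      = (M:ℝ) * Real.log M - (r:ℝ) * Real.log r - ((M:ℝ) - r) * Real.log ((M:ℝ) - r) := by
    field_simp
  rw [hcan, Real.exp_sub, Real.exp_sub]
  have e1 : Real.exp ((M:ℝ) * Real.log M) = (M:ℝ)^M := by
    rw [Real.exp_nat_mul, Real.exp_log hM0]
  have e2 : Real.exp ((r:ℝ) * Real.log r) = (r:ℝ)^r := by
    rw [Real.exp_nat_mul, Real.exp_log hr0]
  have e3 : Real.exp (((M:ℝ) - r) * Real.log ((M:ℝ) - r)) = ((M:ℝ) - r)^(M - r) := by
    have hc : (M:ℝ) - r = ((M - r : ℕ) : ℝ) := by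
      push_cast [Nat.cast_sub (le_of_lt hrM)]; ring
    rw [hc, Real.exp_nat_mul, Real.exp_log (by rw [← hc]; exact hMr)]
  rw [e1, e2, e3, div_div]

lemma ent_bound (M r : ℕ) (x : ℝ) (h0 : 0 < r) (hrx : (r:ℝ) < x) (hxM : x ≤ (M:ℝ)) :
    (2:ℝ) ^ (binH ((r:ℝ)/x) * x) ≤ ((M:ℝ) + 1) * (M.choose r : ℝ) := by
  have hr0 : (0:ℝ) < r := by exact_mod_cast h0
  have hrM : r < M := by exact_mod_cast hrx.trans_le hxM
  have hMr : (0:ℝ) < (M:ℝ) - r := by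
    have : (r:ℝ) < (M:ℝ) := by exact_mod_cast hrM
    linarith
  have hlog2 : (0:ℝ) < Real.log 2 := Real.log_pos (by norm_num)
  have hphi := phi_mono r hr0 x hrx (Set.mem_Ici.mpr le_rfl) (Set.mem_Ici.mpr hxM) hxM
  simp only at hphi
  have hexp : binH ((r:ℝ)/x) * x
      ≤ ((M:ℝ) * Real.log M - (r:ℝ) * Real.log r - ((M:ℝ) - r) * Real.log ((M:ℝ) - r)) / Real.log 2 := by
    rw [ent_eq r x hr0 hrx]
    exact div_le_div_of_nonneg_right (by linarith) hlog2.le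
  calc (2:ℝ) ^ (binH ((r:ℝ)/x) * x)
      ≤ (2:ℝ) ^ (((M:ℝ) * Real.log M - (r:ℝ) * Real.log r - ((M:ℝ) - r) * Real.log ((M:ℝ) - r)) / Real.log 2) :=
        Real.rpow_le_rpow_of_exponent_le (by norm_num) hexp
    _ = (M:ℝ)^M / ((r:ℝ)^r * ((M:ℝ) - (r:ℝ))^(M - r)) := two_rpow_ent M r h0 hrM
    _ ≤ ((M:ℝ) + 1) * (M.choose r : ℝ) := by
        rw [div_le_iff₀ (by positivity)]
        have hnat := pow_le_choose_mul M r h0 hrM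
        have hcast : ((M:ℝ))^M ≤ ((M:ℝ) + 1) * ((M.choose r : ℝ) * (r:ℝ)^r * ((M:ℝ) - r)^(M - r)) := by
          have hc : ((M - r : ℕ) : ℝ) = (M:ℝ) - r := by
            push_cast [Nat.cast_sub (le_of_lt hrM)]; ring
          calc ((M:ℝ))^M = (((M^M : ℕ) : ℝ)) := by push_cast; ring
            _ ≤ (((M + 1) * (M.choose r * r ^ r * (M - r) ^ (M - r)) : ℕ) : ℝ) := by exact_mod_cast hnat
            _ = ((M:ℝ) + 1) * ((M.choose r : ℝ) * (r:ℝ)^r * ((M:ℝ) - r)^(M - r)) := by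
                push_cast [hc]; ring
        linarith [hcast]

namespace CSP
variable {n : ℕ}

lemma contrib_nonneg (f : CSP n) (j : Fin n) : 0 ≤ f.contrib j :=
  Finset.sum_nonneg fun i _ => by split <;> [exact (f.wt_pos i).le; rfl]

lemma sum_contrib (f : CSP n) : ∑ j, f.contrib j = f.wlen := by
  unfold contrib wlen
  rw [Finset.sum_comm]
  refine Finset.sum_congr rfl fun i _ => ?_
  rw [Finset.sum_ite_mem, Finset.univ_inter, Finset.sum_const, nsmul_eq_mul]

lemma le_wstar (f : CSP n) (z : Fin n → Bool) : f.W z ≤ f.wstar :=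
  Finset.le_sup' f.W (Finset.mem_univ z)

lemma exists_opt (f : CSP n) : ∃ z, f.W z = f.wstar := by
  obtain ⟨z, _, hz⟩ := Finset.exists_mem_eq_sup' (Finset.univ_nonempty) f.W
  exact ⟨z, hz.symm⟩

lemma W_flip_ge (f : CSP n) (z : Fin n → Bool) (S : Finset (Fin n)) :
    f.W z - ∑ j ∈ S, f.contrib j ≤ f.W (fun j => if j ∈ S then !(z j) else z j) := by
  classical
  set z' : Fin n → Bool := fun j => if j ∈ S then !(z j) else z j with hz'
  have step1 : f.W z - f.W z' ≤ ∑ i, (if (S ∩ f.vars i).Nonempty then f.wt i else 0) := by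
    rw [W, W, ← Finset.sum_sub_distrib]
    refine Finset.sum_le_sum fun i _ => ?_
    by_cases hne : (S ∩ f.vars i).Nonempty
    · simp only [hne, if_true]
      have h0 : (0:ℝ) ≤ f.wt i := (f.wt_pos i).le
      split <;> split <;> simp <;> linarith
    · have hsat : f.sat i z = f.sat i z' := by
        apply f.sat_local
        intro j hj
        have : j ∉ S := fun hjS => hne ⟨j, Finset.mem_inter.mpr ⟨hjS, hj⟩⟩
        simp [hz', this]
      simp [hne, hsat]
  have step2 : ∑ i, (if (S ∩ f.vars i).Nonempty then f.wt i else 0)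
      ≤ ∑ j ∈ S, f.contrib j := by
    have hswap : ∑ j ∈ S, f.contrib j = ∑ i, ((S ∩ f.vars i).card : ℝ) * f.wt i := by
      unfold contrib
      rw [Finset.sum_comm]
      refine Finset.sum_congr rfl fun i _ => ?_
      rw [Finset.sum_ite_mem, Finset.sum_const, nsmul_eq_mul]
    rw [hswap]
    refine Finset.sum_le_sum fun i _ => ?_
    by_cases hne : (S ∩ f.vars i).Nonempty
    · simp only [hne, if_true]
      have h1 : 1 ≤ (S ∩ f.vars i).card := Finset.Nonempty.card_pos hne
      have := f.wt_pos i
      nlinarith [(Nat.one_le_cast (α := ℝ)).mpr h1]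
    · simp only [hne, if_false]
      exact mul_nonneg (Nat.cast_nonneg _) (f.wt_pos i).le
  linarith

end CSP

end Aux

theorem CSP.count_relative_near_optimal_lower_bound (n : ℕ) (hn : 1 ≤ n) (f : CSP n)
    (hm : 1 ≤ f.m) (hl : 0 < f.wlen)
    (wbar : ℝ) (hwbar0 : 0 < wbar) (hwbar : wbar ≤ f.wstar)
    (ε : ℝ) (hε0 : 0 < ε) (hε1 : ε ≤ 1)
    (δ : ℝ) (hδ : 1 + ε * wbar / f.wlen ≤ δ)
    (r : ℕ) (hr : r = ⌊(n : ℝ) * ε * wbar / (δ * f.wlen)⌋₊) :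
    (2 : ℝ) ^ (binH ((r : ℝ) * δ / ((δ - 1) * (n : ℝ))) * ((δ - 1) / δ) * (n : ℝ)) / ((n : ℝ) + 1)
      ≤ (Nat.card {z : Fin n → Bool // (1 - ε) * f.wstar ≤ f.W z} : ℝ) := by
  classical
  obtain ⟨z0, hz0⟩ := f.exists_opt
  have hws : 0 < f.wstar := lt_of_lt_of_le hwbar0 hwbar
  have hn0 : (0:ℝ) < n := by exact_mod_cast hn
  have hεw : 0 < ε * wbar / f.wlen := div_pos (mul_pos hε0 hwbar0) hl
  have hδ1 : 1 < δ := by linarith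
  have hδ0 : 0 < δ := by linarith
  have hcount : (Nat.card {z : Fin n → Bool // (1 - ε) * f.wstar ≤ f.W z})
      = (Finset.univ.filter (fun z => (1 - ε) * f.wstar ≤ f.W z)).card := by
    rw [Nat.card_eq_fintype_card, Fintype.card_subtype]
  have hz0P : (1 - ε) * f.wstar ≤ f.W z0 := by
    rw [hz0]; nlinarith
  have hone : (1:ℝ) ≤ (Nat.card {z : Fin n → Bool // (1 - ε) * f.wstar ≤ f.W z} : ℝ) := by
    have : 0 < Nat.card {z : Fin n → Bool // (1 - ε) * f.wstar ≤ f.W z} :=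
      @Nat.card_pos _ ⟨⟨z0, hz0P⟩⟩ _
    exact_mod_cast this
  have hnp1 : (0:ℝ) < (n:ℝ) + 1 := by linarith
  -- the trivial bound, used in degenerate cases
  have trivial_bound : ∀ E : ℝ, E = 0 →
      (2 : ℝ) ^ E / ((n : ℝ) + 1)
        ≤ (Nat.card {z : Fin n → Bool // (1 - ε) * f.wstar ≤ f.W z} : ℝ) := by
    intro E hE
    rw [hE, Real.rpow_zero]
    have : (1:ℝ) / ((n:ℝ)+1) ≤ 1 := by
      rw [div_le_one hnp1]; linarith
    linarith
  by_cases hr0 : r = 0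
  · apply trivial_bound
    rw [hr0]
    have : ((0:ℕ):ℝ) * δ / ((δ - 1) * n) = 0 := by simp
    rw [this]
    simp [binH]
  have hrpos : 0 < r := Nat.pos_of_ne_zero hr0
  have hrpos' : (0:ℝ) < r := by exact_mod_cast hrpos
  have hrle : (r:ℝ) ≤ (n:ℝ) * ε * wbar / (δ * f.wlen) := by
    rw [hr]
    exact Nat.floor_le (by positivity)
  have hδ1' : (0:ℝ) < δ - 1 := by linarith
  set x : ℝ := ((δ - 1)/δ) * n with hx
  have hxpos : 0 < x := by positivity
  have hrlex : (r:ℝ) ≤ x := by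
    have h2 : ε * wbar / f.wlen ≤ δ - 1 := by linarith
    calc (r:ℝ) ≤ (n:ℝ) * ε * wbar / (δ * f.wlen) := hrle
      _ = ((n:ℝ)/δ) * (ε * wbar / f.wlen) := by field_simp
      _ ≤ ((n:ℝ)/δ) * (δ - 1) := mul_le_mul_of_nonneg_left h2 (by positivity)
      _ = x := by rw [hx]; ring
  have hexp : (r:ℝ) * δ / ((δ - 1) * n) = (r:ℝ) / x := by
    rw [hx]
    field_simp
  -- Markov: the set B of variables with small contribution is large
  set B := Finset.univ.filter (fun j : Fin n => f.contrib j ≤ δ * f.wlen / n) with hB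
  set Bc := Finset.univ.filter (fun j : Fin n => ¬ (f.contrib j ≤ δ * f.wlen / n)) with hBc
  have hpos : (0:ℝ) < δ * f.wlen / n := by positivity
  have hBbound : x ≤ (B.card : ℝ) := by
    have hsplit : ∑ j ∈ B, f.contrib j + ∑ j ∈ Bc, f.contrib j = f.wlen := by
      rw [← f.sum_contrib]
      exact Finset.sum_filter_add_sum_filter_not _ _ _
    have hlow : (Bc.card : ℝ) * (δ * f.wlen / n) ≤ ∑ j ∈ Bc, f.contrib j := by
      have := Finset.card_nsmul_le_sum Bc f.contrib (δ * f.wlen / n)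
        (fun j hj => le_of_lt (not_le.mp (Finset.mem_filter.mp hj).2))
      simpa [nsmul_eq_mul] using this
    have hBnn : 0 ≤ ∑ j ∈ B, f.contrib j :=
      Finset.sum_nonneg fun j _ => f.contrib_nonneg j
    have hcards : B.card + Bc.card = n := by
      rw [hB, hBc]
      rw [Finset.card_filter_add_card_filter_not]
      simp
    have key : (Bc.card : ℝ) * (δ * f.wlen / n) ≤ f.wlen := by linarith
    have key2 : (Bc.card:ℝ) * δ * f.wlen ≤ f.wlen * n := by
      have h' := mul_le_mul_of_nonneg_right key hn0.le
      calc (Bc.card:ℝ) * δ * f.wlen = (Bc.card:ℝ) * (δ * f.wlen / n) * n := by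
            field_simp
        _ ≤ f.wlen * n := h'
    have key3 : (Bc.card:ℝ) * δ ≤ n := by nlinarith
    have hBcast : (B.card:ℝ) = (n:ℝ) - Bc.card := by
      have h2 : ((B.card + Bc.card : ℕ) : ℝ) = ((n : ℕ) : ℝ) := by rw [hcards]
      push_cast at h2
      linarith
    have hxid : x = (n:ℝ) - (n:ℝ)/δ := by rw [hx]; field_simp
    have hBcle : (Bc.card:ℝ) ≤ (n:ℝ)/δ := by
      rw [le_div_iff₀ hδ0]; exact key3
    linarith
  have hMn : B.card ≤ n := by
    have := Finset.card_filter_le Finset.univ (fun j : Fin n => f.contrib j ≤ δ * f.wlen / n)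
    simpa using this
  -- the flip map
  have hmaps : ∀ S ∈ B.powersetCard r,
      (fun j => if j ∈ S then !(z0 j) else z0 j) ∈
        Finset.univ.filter (fun z => (1 - ε) * f.wstar ≤ f.W z) := by
    intro S hS
    obtain ⟨hSB, hScard⟩ := Finset.mem_powersetCard.mp hS
    have hc : ∑ j ∈ S, f.contrib j ≤ (r:ℝ) * (δ * f.wlen / n) := by
      have := Finset.sum_le_card_nsmul S f.contrib (δ * f.wlen / n)
        (fun j hj => (Finset.mem_filter.mp (hSB hj)).2)
      rw [hScard] at this
      simpa [nsmul_eq_mul] using this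
    have hc2 : (r:ℝ) * (δ * f.wlen / n) ≤ ε * wbar := by
      have h' := mul_le_mul_of_nonneg_right hrle hpos.le
      calc (r:ℝ) * (δ * f.wlen / n) ≤ ((n:ℝ) * ε * wbar / (δ * f.wlen)) * (δ * f.wlen / n) := h'
        _ = ε * wbar := by field_simp
    have hflip := f.W_flip_ge z0 S
    have hwle : ε * wbar ≤ ε * f.wstar := mul_le_mul_of_nonneg_left hwbar hε0.le
    rw [Finset.mem_filter]
    refine ⟨Finset.mem_univ _, ?_⟩
    have hsum : ∑ j ∈ S, f.contrib j ≤ ε * f.wstar := by linarith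
    rw [hz0] at hflip
    linarith
  have hinj : Set.InjOn (fun S : Finset (Fin n) => fun j => if j ∈ S then !(z0 j) else z0 j)
      (B.powersetCard r) := by
    intro S hS T hT heq
    ext j
    have hj := congrFun heq j
    simp only at hj
    by_cases hjS : j ∈ S <;> by_cases hjT : j ∈ T <;>
      simp [hjS, hjT] at hj ⊢
  have hchoose : B.card.choose r ≤
      (Finset.univ.filter (fun z => (1 - ε) * f.wstar ≤ f.W z)).card := by
    rw [← Finset.card_powersetCard]
    exact Finset.card_le_card_of_injOn _ hmaps hinj
  rcases eq_or_lt_of_le hrlex with heq | hlt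
  · apply trivial_bound
    have h1 : (r:ℝ) * δ / ((δ - 1) * n) = 1 := by
      rw [hexp, ← heq, div_self (ne_of_gt hrpos')]
    rw [h1]
    simp [binH]
  · have hb := ent_bound B.card r x hrpos hlt hBbound
    have hexpeq : binH ((r:ℝ)*δ/((δ-1)*(n:ℝ))) * ((δ-1)/δ) * (n:ℝ) = binH ((r:ℝ)/x) * x := by
      rw [hexp, hx]; ring
    rw [hexpeq, div_le_iff₀ hnp1]
    have c2 : ((B.card.choose r : ℕ):ℝ) ≤
        ((Finset.univ.filter (fun z => (1 - ε) * f.wstar ≤ f.W z)).card : ℝ) :=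
      Nat.cast_le.mpr hchoose
    have c1 : ((B.card:ℝ) + 1) ≤ (n:ℝ) + 1 := by
      have : (B.card:ℝ) ≤ (n:ℝ) := Nat.cast_le.mpr hMn
      linarith
    calc (2:ℝ) ^ (binH ((r:ℝ)/x) * x) ≤ ((B.card:ℝ) + 1) * (B.card.choose r : ℝ) := hb
      _ ≤ ((n:ℝ) + 1) * ((Finset.univ.filter (fun z => (1 - ε) * f.wstar ≤ f.W z)).card : ℝ) :=
          mul_le_mul c1 c2 (Nat.cast_nonneg _) (by positivity)
      _ = (Nat.card {z : Fin n → Bool // (1 - ε) * f.wstar ≤ f.W z} : ℝ) * ((n:ℝ) + 1) := by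
          rw [hcount]; ring
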